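/- For every integer D ≥ 1 and every real g with 0 ≤ g ≤ g_c := D^D/(D+1)^{D+1}, there exists a unique real number G in the interval [1, (D+1)/D] satisfying G = 1 + g·G^{D+1}; in particular this solution satisfies 0 ≤ G − 1 ≤ 1/D. -/

import Mathlib

/-- For every integer `D ≥ 1` and every real `g` with
`0 ≤ g ≤ g_c := D^D/(D+1)^(D+1)`, there exists a unique real `G ∈ [1, (D+1)/D]` satisfying
`G = 1 + g·G^(D+1)`; in particular this solution satisfies `0 ≤ G − 1 ≤ 1/D`. -/
theorem melonic_equation_unique_solution (D : ℕ) (hD : 1 ≤ D) (g : ℝ) (hg0 : 0 ≤ g)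
    (hgc : g ≤ (D : ℝ) ^ D / ((D : ℝ) + 1) ^ (D + 1)) :
    (∃! G : ℝ, G ∈ Set.Icc (1 : ℝ) (((D : ℝ) + 1) / D) ∧ G = 1 + g * G ^ (D + 1)) ∧
    (∀ G : ℝ, G ∈ Set.Icc (1 : ℝ) (((D : ℝ) + 1) / D) → G = 1 + g * G ^ (D + 1) →
      0 ≤ G - 1 ∧ G - 1 ≤ 1 / D) := by
  have hDpos : (0:ℝ) < D := by exact_mod_cast Nat.pos_of_ne_zero (by omega)
  have hD1pos : (0:ℝ) < (D:ℝ) + 1 := by linarith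
  set b : ℝ := ((D:ℝ) + 1) / D with hb
  set gc : ℝ := (D : ℝ) ^ D / ((D : ℝ) + 1) ^ (D + 1) with hgcdef
  have hgcpos : 0 < gc := by
    apply div_pos (pow_pos hDpos _) (pow_pos hD1pos _)
  have hb1 : (1:ℝ) < b := by
    rw [hb, lt_div_iff₀ hDpos]; linarith
  -- key computation: gc * (D+1) * b^D = 1
  have hkey : gc * ((D:ℝ) + 1) * b ^ D = 1 := by
    rw [hgcdef, hb, div_pow, pow_succ]
    field_simp
  -- key computation 2: gc * b^(D+1) = 1/D
  have hkey2 : gc * b ^ (D + 1) = 1 / D := by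
    rw [hgcdef, hb, div_pow, div_mul_div_comm,
      div_eq_div_iff (by positivity) (by positivity)]
    rw [pow_succ ((D:ℝ)) D]
    ring
  -- the function h x = x - g x^(D+1) is strictly monotone on [1,b]
  set h : ℝ → ℝ := fun x => x - g * x ^ (D + 1) with hh
  have hcont : ContinuousOn h (Set.Icc 1 b) := by
    apply Continuous.continuousOn; fun_prop
  have hmono : StrictMonoOn h (Set.Icc (1:ℝ) b) := by
    apply strictMonoOn_of_deriv_pos (convex_Icc 1 b) hcont
    intro x hx
    rw [interior_Icc] at hx
    have hx0 : (0:ℝ) < x := lt_trans one_pos hx.1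
    have hderiv : deriv h x = 1 - g * (((D:ℝ) + 1) * x ^ D) := by
      rw [hh]
      have : HasDerivAt (fun x : ℝ => x - g * x ^ (D + 1))
          (1 - g * ((↑(D + 1) : ℝ) * x ^ D)) x := by
        have := (hasDerivAt_id' x).sub (((hasDerivAt_pow (D + 1) x)).const_mul g)
        simp only [Nat.add_sub_cancel] at this
        exact this
      rw [this.deriv]; push_cast; ring
    rw [hderiv]
    have hxb : x ^ D < b ^ D := by
      exact pow_lt_pow_left₀ hx.2 (le_of_lt hx0) (by omega)
    have h1 : g * (((D:ℝ) + 1) * x ^ D) ≤ gc * (((D:ℝ) + 1) * x ^ D) := by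
      apply mul_le_mul_of_nonneg_right hgc
      positivity
    have h2 : gc * (((D:ℝ) + 1) * x ^ D) < gc * (((D:ℝ) + 1) * b ^ D) := by
      apply mul_lt_mul_of_pos_left _ hgcpos
      exact mul_lt_mul_of_pos_left hxb hD1pos
    have h3 : gc * (((D:ℝ) + 1) * b ^ D) = 1 := by rw [← mul_assoc]; exact hkey
    linarith
  have hbpos : (0:ℝ) < b := lt_trans one_pos hb1
  -- boundary values
  have hH1 : h 1 ≤ 1 := by simp [hh]; linarith
  have hHb : 1 ≤ h b := by
    have : g * b ^ (D + 1) ≤ gc * b ^ (D + 1) :=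
      mul_le_mul_of_nonneg_right hgc (by positivity)
    have hbd : b - 1 / D = 1 := by rw [hb]; field_simp; ring
    simp only [hh]
    linarith [hkey2]
  -- existence via IVT
  have hivt : (1:ℝ) ∈ h '' Set.Icc 1 b := by
    have := intermediate_value_Icc (le_of_lt hb1) hcont
    exact this ⟨hH1, hHb⟩
  obtain ⟨G, hGmem, hGeq⟩ := hivt
  have hfix : G = 1 + g * G ^ (D + 1) := by
    have : G - g * G ^ (D + 1) = 1 := hGeq
    linarith
  constructor
  · refine ⟨G, ⟨hGmem, hfix⟩, ?_⟩
    rintro y ⟨hymem, hyeq⟩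
    apply hmono.injOn hymem hGmem
    show y - g * y ^ (D + 1) = h G
    rw [hGeq]; linarith
  · intro G' hG'mem _
    constructor
    · linarith [hG'mem.1]
    · have : G' ≤ b := hG'mem.2
      have hbeq : b = 1 + 1 / D := by rw [hb]; field_simp
      linarith [hbeq ▸ this]
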